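/- (Simplified one-round recursion of PDO with λ = 4δ.) Assume each f_i is μ-strongly convex (μ ≥ 0) and L-smooth, the family is δ-similar with 0 < δ ≤ L and μ ≤ L; let W be a gossip matrix with spectral gap parameter ρ ∈ (0,1) with ρ ≤ δ/(6L), set λ := 4δ, and let x⋆ be a minimizer of f. At round r, let x_i^{(r)}, h_i^{(r)} ∈ ℝ^d with ∑_{i=1}^n h_i^{(r)} = 0; define F_{i,r}(x) := f_i(x) + ⟨h_i^{(r)}, x⟩ + (λ/2)·‖x − x_i^{(r)}‖²; let x_i^{(r+1/2)} ∈ ℝ^d be arbitrary, x_i^{(r+1)} := ∑_j W_{ij}·x_j^{(r+1/2)}, and h_i^{(r+1)} := ∑_j W_{ij}·(h_j^{(r)} + ∇f_j(x_j^{(r+1)})) − ∇f_i(x_i^{(r+1)}). Then, with x̄^{(s)} := (1/n)·∑_i x_i^{(s)} and E^{(s)} := (1/n)·∑_i ‖h_i^{(s)} − ∇h_i(x̄^{(s)})‖²: f(x⋆) + (2δ/n)·∑_i ‖x_i^{(r)} − x⋆‖² + (1/δ)·E^{(r)} ≥ f(x̄^{(r+1)}) + (1 + μ/(4δ))·(2δ/n)·∑_i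 ‖x_i^{(r+1)} − x⋆‖² + (1/δ)·(1 + μ/(4δ))·E^{(r+1)} + (δ/n)·∑_i ‖x_i^{(r+1/2)} − x_i^{(r)}‖² + (1/n)·∑_i ⟨∇F_{i,r}(x_i^{(r+1/2)}), x⋆ − x_i^{(r+1/2)}⟩. -/

import Mathlib

open scoped BigOperators RealInnerProductSpace

abbrev Vec (d : ℕ) := EuclideanSpace ℝ (Fin d)

lemma jensen_sq (n d : ℕ) (v : Fin n → Vec d) : ‖∑ i, v i‖^2 ≤ (n:ℝ) * ∑ i, ‖v i‖^2 := by
  have h1 : ‖∑ i, v i‖ ≤ ∑ i, ‖v i‖ := norm_sum_le _ _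
  have h2 : (∑ i, ‖v i‖)^2 ≤ ((Finset.univ : Finset (Fin n)).card : ℝ) * ∑ i, ‖v i‖^2 := by
    exact_mod_cast sq_sum_le_card_mul_sum_sq (s := (Finset.univ : Finset (Fin n))) (f := fun i => ‖v i‖)
  simp only [Finset.card_univ, Fintype.card_fin] at h2
  have h0 : (0:ℝ) ≤ ∑ i, ‖v i‖ := Finset.sum_nonneg fun i _ => norm_nonneg _
  nlinarith [norm_nonneg (∑ i, v i)]

lemma sum_const_vec (n d : ℕ) (c : Vec d) : ∑ _i : Fin n, c = (n:ℝ) • c := by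
  rw [Finset.sum_const, Finset.card_univ, Fintype.card_fin, Nat.cast_smul_eq_nsmul]

lemma var_id (n d : ℕ) (hn : 0 < n) (x : Fin n → Vec d) (p c : Vec d)
    (hc : c = (1/(n:ℝ)) • ∑ i, x i) :
    ∑ i, ‖x i - p‖^2 = ∑ i, ‖x i - c‖^2 + (n:ℝ) * ‖c - p‖^2 := by
  have hn' : (0:ℝ) < n := by exact_mod_cast hn
  have hsum : ∑ i, (x i - c) = 0 := by
    rw [Finset.sum_sub_distrib, sum_const_vec, hc, smul_smul]
    have : (n:ℝ) * (1/(n:ℝ)) = 1 := by field_simp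
    rw [this, one_smul, sub_self]
  have expand : ∀ i, ‖x i - p‖^2 = ‖x i - c‖^2 + 2*⟪x i - c, c - p⟫ + ‖c - p‖^2 := by
    intro i
    have : x i - p = (x i - c) + (c - p) := by abel
    rw [this, norm_add_sq_real]
  calc ∑ i, ‖x i - p‖^2 = ∑ i, (‖x i - c‖^2 + 2*⟪x i - c, c - p⟫ + ‖c - p‖^2) :=
        Finset.sum_congr rfl fun i _ => expand i
    _ = ∑ i, ‖x i - c‖^2 + 2*⟪∑ i, (x i - c), c - p⟫ + (n:ℝ)*‖c-p‖^2 := by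
        rw [Finset.sum_add_distrib, Finset.sum_add_distrib, sum_inner]
        simp [Finset.mul_sum, Finset.sum_const, Finset.card_univ, mul_comm]
    _ = ∑ i, ‖x i - c‖^2 + (n:ℝ)*‖c-p‖^2 := by rw [hsum]; simp

lemma young24 (d : ℕ) (a b : Vec d) (δ : ℝ) (hδ : 0 < δ) :
    ⟪a, b⟫ ≤ 1/(4*δ) * ‖a‖^2 + δ * ‖b‖^2 := by
  have h := real_inner_le_norm a b
  have h3 : (0:ℝ) ≤ 1/(4*δ) * (‖a‖ - 2*δ*‖b‖)^2 := by positivity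
  have key : 1/(4*δ) * (‖a‖-2*δ*‖b‖)^2 = 1/(4*δ)*‖a‖^2 + δ*‖b‖^2 - ‖a‖*‖b‖ := by
    field_simp; ring
  linarith

lemma sq4 (d : ℕ) (a b c e : Vec d) :
    ‖a+b+c+e‖^2 ≤ 4*(‖a‖^2+‖b‖^2+‖c‖^2+‖e‖^2) := by
  have h : ‖a+b+c+e‖ ≤ ‖a‖+‖b‖+‖c‖+‖e‖ := by
    calc ‖a+b+c+e‖ ≤ ‖a+b+c‖+‖e‖ := norm_add_le _ _
      _ ≤ (‖a+b‖+‖c‖)+‖e‖ := by have := norm_add_le (a+b) c; linarith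
      _ ≤ ((‖a‖+‖b‖)+‖c‖)+‖e‖ := by have := norm_add_le a b; linarith
  have h2 : ‖a+b+c+e‖^2 ≤ (‖a‖+‖b‖+‖c‖+‖e‖)^2 := by
    have hnn : (0:ℝ) ≤ ‖a+b+c+e‖ := norm_nonneg _
    nlinarith
  nlinarith [sq_nonneg (‖a‖-‖b‖), sq_nonneg (‖a‖-‖c‖), sq_nonneg (‖a‖-‖e‖),
    sq_nonneg (‖b‖-‖c‖), sq_nonneg (‖b‖-‖e‖), sq_nonneg (‖c‖-‖e‖)]

lemma sq2 (d : ℕ) (a b : Vec d) : ‖a+b‖^2 ≤ 2*(‖a‖^2+‖b‖^2) := by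
  have h := norm_add_le a b
  have h2 : ‖a+b‖^2 ≤ (‖a‖+‖b‖)^2 := by
    have := norm_nonneg (a+b); nlinarith
  nlinarith [sq_nonneg (‖a‖-‖b‖)]

lemma sum_const_real (n : ℕ) (c : ℝ) : ∑ _i : Fin n, c = (n:ℝ) * c := by
  rw [Finset.sum_const, Finset.card_univ, Fintype.card_fin, nsmul_eq_mul]

set_option maxHeartbeats 1000000 in
/-- Simplified one-round recursion of PDO with `λ = 4δ`. -/
theorem stmt_6 (d n : ℕ) (hn : 1 ≤ n)
    (f : Fin n → Vec d → ℝ) (g : Fin n → Vec d → Vec d)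
    (hdiff : ∀ i x, HasGradientAt (f i) (g i x) x)
    (μ L δ ρ : ℝ) (hμ : 0 ≤ μ) (hL : 0 < L) (hδ : 0 < δ)
    (hδL : δ ≤ L) (hμL : μ ≤ L)
    (hρ0 : 0 < ρ) (hρ1 : ρ < 1) (hρle : ρ ≤ δ / (6 * L))
    (hsc : ∀ i (x y : Vec d),
      f i y + ⟪g i y, x - y⟫ + μ / 2 * ‖x - y‖ ^ 2 ≤ f i x)
    (hsmooth : ∀ i (x y : Vec d), ‖g i x - g i y‖ ≤ L * ‖x - y‖)
    (hsim : ∀ x y : Vec d,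
      (1 / (n : ℝ)) * ∑ i, ‖(((1 / (n : ℝ)) • ∑ j, g j x) - g i x)
          - (((1 / (n : ℝ)) • ∑ j, g j y) - g i y)‖ ^ 2
        ≤ δ ^ 2 * ‖x - y‖ ^ 2)
    (W : Matrix (Fin n) (Fin n) ℝ)
    (hWsymm : ∀ i j, W i j = W j i)
    (hWcol : ∀ j, ∑ i, W i j = 1)
    (hWgap : ∀ z : Fin n → Vec d,
      ∑ i, ‖(∑ j, W i j • z j) - (1 / (n : ℝ)) • ∑ k, z k‖ ^ 2
        ≤ ρ ^ 2 * ∑ i, ‖z i - (1 / (n : ℝ)) • ∑ k, z k‖ ^ 2)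
    (fbar : Vec d → ℝ) (hfbar : ∀ z, fbar z = (1 / (n : ℝ)) * ∑ i, f i z)
    (xstar : Vec d) (hmin : ∀ z, fbar xstar ≤ fbar z)
    (xr hr xhalf xnext hnext : Fin n → Vec d)
    (hsum0 : ∑ i, hr i = 0)
    (hxnext : ∀ i, xnext i = ∑ j, W i j • xhalf j)
    (hhnext : ∀ i, hnext i
      = (∑ j, W i j • (hr j + g j (xnext j))) - g i (xnext i))
    (xbarr xbarnext : Vec d)
    (hxbarr : xbarr = (1 / (n : ℝ)) • ∑ i, xr i)
    (hxbarnext : xbarnext = (1 / (n : ℝ)) • ∑ i, xnext i)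
    (Errr Errnext : ℝ)
    (hErrr : Errr = (1 / (n : ℝ)) * ∑ i,
      ‖hr i - (((1 / (n : ℝ)) • ∑ j, g j xbarr) - g i xbarr)‖ ^ 2)
    (hErrnext : Errnext = (1 / (n : ℝ)) * ∑ i,
      ‖hnext i - (((1 / (n : ℝ)) • ∑ j, g j xbarnext) - g i xbarnext)‖ ^ 2) :
    fbar xbarnext
      + (1 + μ / (4 * δ)) * ((2 * δ / (n : ℝ)) * ∑ i, ‖xnext i - xstar‖ ^ 2)
      + (1 / δ) * (1 + μ / (4 * δ)) * Errnext
      + (δ / (n : ℝ)) * ∑ i, ‖xhalf i - xr i‖ ^ 2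
      + (1 / (n : ℝ)) * ∑ i,
          ⟪g i (xhalf i) + hr i + (4 * δ) • (xhalf i - xr i), xstar - xhalf i⟫
    ≤ fbar xstar
      + (2 * δ / (n : ℝ)) * ∑ i, ‖xr i - xstar‖ ^ 2
      + (1 / δ) * Errr := by
  have hn' : (0:ℝ) < n := by exact_mod_cast hn
  have hn0 : (n:ℝ) ≠ 0 := ne_of_gt hn'
  -- scalar preliminaries
  have hρδ : ρ * (6*L) ≤ δ := by
    rw [← le_div_iff₀ (by positivity)]; exact hρle
  have hρ6 : ρ ≤ 1/6 := by nlinarith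
  have hρ36 : ρ^2 ≤ 1/36 := by nlinarith
  have h36 : 36*(L^2*ρ^2) ≤ δ^2 := by
    nlinarith [mul_self_le_mul_self (by positivity : (0:ℝ) ≤ ρ*(6*L)) hρδ]
  set m := 1 + μ/(4*δ) with hm_def
  have hm1 : 1 ≤ m := by
    rw [hm_def]; have : 0 ≤ μ/(4*δ) := by positivity
    linarith
  have hm0 : (0:ℝ) ≤ m := by linarith
  have hmρ16 : m*ρ^2 ≤ 1/16 := by
    have aδ : δ^2 ≤ L*δ := by nlinarith
    have a1 : (4*δ+μ)*(36*(L^2*ρ^2)) ≤ (4*δ+μ)*δ^2 :=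
      mul_le_mul_of_nonneg_left h36 (by positivity)
    have a2 : (4*δ+μ)*δ^2 ≤ (5*L)*δ^2 :=
      mul_le_mul_of_nonneg_right (by linarith) (sq_nonneg δ)
    have a3 : (5*L)*δ^2 ≤ (5*L)*(L*δ) :=
      mul_le_mul_of_nonneg_left aδ (by positivity)
    have key : (4*δ+μ)*ρ^2 ≤ δ/4 := by
      have h1 : 36*L^2*((4*δ+μ)*ρ^2) ≤ 36*L^2*(δ/4) := by
        linarith [a1, a2, a3, mul_nonneg (mul_nonneg hL.le hL.le) hδ.le]
      exact le_of_mul_le_mul_left h1 (by positivity : (0:ℝ) < 36*L^2)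
    have e1 : m*ρ^2 = ((4*δ+μ)*ρ^2)/(4*δ) := by
      rw [hm_def]; field_simp
    have e2 : (δ/4)/(4*δ) = 1/16 := by
      field_simp; ring
    rw [e1, ← e2]
    exact div_le_div_of_nonneg_right key (by positivity)
  -- abbreviations
  set G := (1/(n:ℝ)) • ∑ j, g j xbarnext with hG
  set Gr := (1/(n:ℝ)) • ∑ j, g j xbarr with hGr
  set T := ∑ i, ⟪g i (xhalf i) + hr i + (4 * δ) • (xhalf i - xr i), xstar - xhalf i⟫ with hT
  set Dn := ∑ i, ‖xnext i - xstar‖^2 with hDnd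
  set Dsum := ∑ i, ‖xhalf i - xr i‖^2 with hDsumd
  set Sr := ∑ i, ‖xr i - xstar‖^2 with hSrd
  set Er := ∑ i, ‖hr i - (Gr - g i xbarr)‖^2 with hErd
  set En := ∑ i, ‖hnext i - (G - g i xbarnext)‖^2 with hEnd
  set Sh := ∑ i, ‖xhalf i - xbarnext‖^2 with hShd
  set Sn := ∑ i, ‖xnext i - xbarnext‖^2 with hSnd
  set Dh := ∑ i, ‖xhalf i - xstar‖^2 with hDhd
  set B := ‖xbarnext - xstar‖^2 with hBd
  set A := ∑ i, (f i (xhalf i) + ⟪hr i, xhalf i⟫) with hAd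
  set Fstar := ∑ i, f i xstar with hFstard
  set Fnext := ∑ i, f i xbarnext with hFnextd
  clear_value m G Gr T Dn Dsum Sr Er En Sh Sn Dh B A Fstar Fnext
  have hErnn : 0 ≤ Er := by
    rw [hErd]; exact Finset.sum_nonneg fun i _ => sq_nonneg _
  have hDsumnn : 0 ≤ Dsum := by
    rw [hDsumd]; exact Finset.sum_nonneg fun i _ => sq_nonneg _
  have hShnn : 0 ≤ Sh := by
    rw [hShd]; exact Finset.sum_nonneg fun i _ => sq_nonneg _
  have hSnnn : 0 ≤ Sn := by
    rw [hSnd]; exact Finset.sum_nonneg fun i _ => sq_nonneg _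
  -- averages preserved
  have hsumxnext : ∑ i, xnext i = ∑ j, xhalf j := by
    calc ∑ i, xnext i = ∑ i, ∑ j, W i j • xhalf j :=
          Finset.sum_congr rfl fun i _ => hxnext i
      _ = ∑ j, ∑ i, W i j • xhalf j := Finset.sum_comm
      _ = ∑ j, (∑ i, W i j) • xhalf j :=
          Finset.sum_congr rfl fun j _ => (Finset.sum_smul).symm
      _ = ∑ j, xhalf j := Finset.sum_congr rfl fun j _ => by rw [hWcol j, one_smul]
  have havg : xbarnext = (1/(n:ℝ)) • ∑ i, xhalf i := by rw [hxbarnext, hsumxnext]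
  -- variance identities
  have hvarh : Dh = Sh + (n:ℝ)*B := by
    rw [hDhd, hShd, hBd]; exact var_id n d hn xhalf xstar xbarnext havg
  have hvarn : Dn = Sn + (n:ℝ)*B := by
    rw [hDnd, hSnd, hBd]; exact var_id n d hn xnext xstar xbarnext hxbarnext
  -- gossip contraction on xhalf
  have hgos : Sn ≤ ρ^2*Sh := by
    have h := hWgap xhalf
    rw [← havg] at h
    have h2 : ∀ i, ∑ j, W i j • xhalf j = xnext i := fun i => (hxnext i).symm
    simp only [h2] at h
    rw [hSnd, hShd]; exact h
  -- mean movement bound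
  have hbardiff : xbarnext - xbarr = (1/(n:ℝ)) • ∑ i, (xhalf i - xr i) := by
    rw [havg, hxbarr, ← smul_sub, ← Finset.sum_sub_distrib]
  have hbar2 : (n:ℝ)*‖xbarnext - xbarr‖^2 ≤ Dsum := by
    have e : ‖xbarnext - xbarr‖^2 = (1/(n:ℝ))^2 * ‖∑ i, (xhalf i - xr i)‖^2 := by
      rw [hbardiff, norm_smul, mul_pow, Real.norm_eq_abs, sq_abs]
    have hj := jensen_sq n d (fun i => xhalf i - xr i)
    rw [e]
    calc (n:ℝ)*((1/(n:ℝ))^2*‖∑ i, (xhalf i - xr i)‖^2)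
        ≤ (n:ℝ)*((1/(n:ℝ))^2*((n:ℝ)*Dsum)) := by
          apply mul_le_mul_of_nonneg_left _ hn'.le
          apply mul_le_mul_of_nonneg_left _ (by positivity)
          rw [hDsumd]; exact hj
      _ = Dsum := by field_simp
  -- similarity bound on gradient-heterogeneity drift
  have hsimD : ∑ i, ‖(G - g i xbarnext) - (Gr - g i xbarr)‖^2 ≤ δ^2*Dsum := by
    have h1 := hsim xbarnext xbarr
    rw [← hG, ← hGr] at h1
    have h2 := mul_le_mul_of_nonneg_left h1 hn'.le
    have e : (n:ℝ)*((1/(n:ℝ)) * ∑ i, ‖(G - g i xbarnext) - (Gr - g i xbarr)‖^2)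
        = ∑ i, ‖(G - g i xbarnext) - (Gr - g i xbarr)‖^2 := by
      field_simp
    rw [e] at h2
    have h4 := mul_le_mul_of_nonneg_left hbar2 (sq_nonneg δ)
    linarith only [h2, h4]
  -- H1 : strong convexity of the prox objective
  have hμm : μ/2 + 2*δ = 2*δ*m := by rw [hm_def]; field_simp; ring
  have keyi : ∀ i, (f i (xhalf i) + ⟪hr i, xhalf i⟫)
      + ⟪g i (xhalf i) + hr i + (4 * δ) • (xhalf i - xr i), xstar - xhalf i⟫
      + 2*δ*‖xhalf i - xr i‖^2 + (μ/2 + 2*δ)*‖xhalf i - xstar‖^2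
      ≤ f i xstar + ⟪hr i, xstar⟫ + 2*δ*‖xr i - xstar‖^2 := by
    intro i
    have e1 := hsc i xstar (xhalf i)
    have e2 : 2*δ*‖xr i - xstar‖^2 = 2*δ*‖xhalf i - xr i‖^2
        + 4*δ*⟪xhalf i - xr i, xstar - xhalf i⟫ + 2*δ*‖xstar - xhalf i‖^2 := by
      have e : xstar - xr i = (xhalf i - xr i) + (xstar - xhalf i) := by abel
      rw [show ‖xr i - xstar‖ = ‖xstar - xr i‖ from norm_sub_rev _ _, e, norm_add_sq_real]
      ring
    have e3 : ⟪g i (xhalf i) + hr i + (4 * δ) • (xhalf i - xr i), xstar - xhalf i⟫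
        = ⟪g i (xhalf i), xstar - xhalf i⟫ + ⟪hr i, xstar - xhalf i⟫
          + 4*δ*⟪xhalf i - xr i, xstar - xhalf i⟫ := by
      rw [inner_add_left, inner_add_left, real_inner_smul_left]
    have e4 : ⟪hr i, xstar - xhalf i⟫ = ⟪hr i, xstar⟫ - ⟪hr i, xhalf i⟫ :=
      inner_sub_right _ _ _
    have e5 : ‖xhalf i - xstar‖^2 = ‖xstar - xhalf i‖^2 := by rw [norm_sub_rev]
    rw [e3, e4, e5]
    linarith
  have H1 : A + T + 2*δ*Dsum + 2*δ*m*Dh ≤ Fstar + 2*δ*Sr := by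
    have hs := Finset.sum_le_sum (fun i (_ : i ∈ Finset.univ) => keyi i)
    have eL : ∑ i, ((f i (xhalf i) + ⟪hr i, xhalf i⟫)
        + ⟪g i (xhalf i) + hr i + (4 * δ) • (xhalf i - xr i), xstar - xhalf i⟫
        + 2*δ*‖xhalf i - xr i‖^2 + (μ/2 + 2*δ)*‖xhalf i - xstar‖^2)
        = A + T + 2*δ*Dsum + (μ/2 + 2*δ)*Dh := by
      rw [hAd, hT, hDsumd, hDhd]
      simp only [Finset.sum_add_distrib, ← Finset.mul_sum]
    have h0 : ∑ i, ⟪hr i, xstar⟫ = (0:ℝ) := by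
      rw [← sum_inner, hsum0, inner_zero_left]
    have eR : ∑ i, (f i xstar + ⟪hr i, xstar⟫ + 2*δ*‖xr i - xstar‖^2)
        = Fstar + 2*δ*Sr := by
      rw [hFstard, hSrd]
      simp only [Finset.sum_add_distrib, ← Finset.mul_sum]
      rw [h0]; ring
    rw [eL, eR] at hs
    rw [← hμm]; exact hs
  -- H4 : bound on f(xbarnext)
  have hsums : ∑ i, (xhalf i - xbarnext) = 0 := by
    rw [Finset.sum_sub_distrib, sum_const_vec, havg, smul_smul]
    have e : (n:ℝ) * (1/(n:ℝ)) = 1 := by field_simp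
    rw [e, one_smul, sub_self]
  have hzero : ∑ i, ⟪hr i, xbarnext⟫ = (0:ℝ) := by
    rw [← sum_inner, hsum0, inner_zero_left]
  have hGzero : ∑ i, ⟪G, xhalf i - xbarnext⟫ = (0:ℝ) := by
    rw [← inner_sum, hsums, inner_zero_right]
  have H4 : Fnext ≤ A + (1/2)*((1/δ)*Er) + (δ/2)*Dsum + δ*Sh := by
    have step1 : Fnext ≤ (∑ i, f i (xhalf i)) - ∑ i, ⟪g i xbarnext, xhalf i - xbarnext⟫ := by
      have per : ∀ i, f i xbarnext + ⟪g i xbarnext, xhalf i - xbarnext⟫ ≤ f i (xhalf i) := by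
        intro i
        have h := hsc i (xhalf i) xbarnext
        have hnn : 0 ≤ μ/2*‖xhalf i - xbarnext‖^2 := by positivity
        linarith
      have hs := Finset.sum_le_sum (fun i (_ : i ∈ Finset.univ) => per i)
      rw [Finset.sum_add_distrib] at hs
      rw [hFnextd]
      linarith
    have r1 : (∑ i, f i (xhalf i)) - ∑ i, ⟪g i xbarnext, xhalf i - xbarnext⟫
        = A + ∑ i, ⟪(G - g i xbarnext) - hr i, xhalf i - xbarnext⟫ := by
      have e : ∀ i, ⟪(G - g i xbarnext) - hr i, xhalf i - xbarnext⟫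
          = ⟪G, xhalf i - xbarnext⟫ - ⟪g i xbarnext, xhalf i - xbarnext⟫
            - (⟪hr i, xhalf i⟫ - ⟪hr i, xbarnext⟫) := by
        intro i
        simp only [inner_sub_left, inner_sub_right]
        ring
      rw [hAd]
      simp only [e]
      simp only [Finset.sum_sub_distrib, Finset.sum_add_distrib]
      rw [hzero, hGzero]
      ring
    have young_sum : ∑ i, ⟪(G - g i xbarnext) - hr i, xhalf i - xbarnext⟫
        ≤ 1/(4*δ) * ∑ i, ‖(G - g i xbarnext) - hr i‖^2 + δ*Sh := by
      have hs := Finset.sum_le_sum (fun i (_ : i ∈ Finset.univ) =>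
        young24 d ((G - g i xbarnext) - hr i) (xhalf i - xbarnext) δ hδ)
      rw [Finset.sum_add_distrib, ← Finset.mul_sum, ← Finset.mul_sum] at hs
      rw [hShd]; exact hs
    have normbd : ∑ i, ‖(G - g i xbarnext) - hr i‖^2 ≤ 2*Er + 2*(δ^2*Dsum) := by
      have per : ∀ i, ‖(G - g i xbarnext) - hr i‖^2
          ≤ 2*(‖hr i - (Gr - g i xbarr)‖^2 + ‖(G - g i xbarnext) - (Gr - g i xbarr)‖^2) := by
        intro i
        have e : (G - g i xbarnext) - hr i
            = ((Gr - g i xbarr) - hr i) + ((G - g i xbarnext) - (Gr - g i xbarr)) := by abel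
        have h := sq2 d ((Gr - g i xbarr) - hr i) ((G - g i xbarnext) - (Gr - g i xbarr))
        rw [← e] at h
        have e2 : ‖(Gr - g i xbarr) - hr i‖ = ‖hr i - (Gr - g i xbarr)‖ := norm_sub_rev _ _
        rw [e2] at h; exact h
      have hs := Finset.sum_le_sum (fun i (_ : i ∈ Finset.univ) => per i)
      rw [← Finset.mul_sum, Finset.sum_add_distrib, ← hErd] at hs
      linarith only [hs, hsimD]
    have comb : Fnext ≤ A + 1/(4*δ)*(2*Er + 2*(δ^2*Dsum)) + δ*Sh := by
      have h1 := step1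
      rw [r1] at h1
      have h2 := mul_le_mul_of_nonneg_left normbd (by positivity : (0:ℝ) ≤ 1/(4*δ))
      linarith only [h1, h2, young_sum]
    have efin : 1/(4*δ)*(2*Er + 2*(δ^2*Dsum)) = (1/2)*((1/δ)*Er) + (δ/2)*Dsum := by
      field_simp; ring
    linarith only [comb, efin]
  -- H5 : bound on the new error
  have hWz := hWgap (fun j => hr j + g j (xnext j))
  set zb := (1/(n:ℝ)) • ∑ k, (hr k + g k (xnext k)) with hzbd
  clear_value zb
  have hzbalt : zb = (1/(n:ℝ)) • ∑ k, g k (xnext k) := by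
    rw [hzbd, Finset.sum_add_distrib, hsum0, zero_add]
  have hsmn : ∑ i, ‖g i (xnext i) - g i xbarnext‖^2 ≤ L^2*Sn := by
    have per : ∀ k, ‖g k (xnext k) - g k xbarnext‖^2 ≤ L^2*‖xnext k - xbarnext‖^2 := by
      intro k
      have h := hsmooth k (xnext k) xbarnext
      have h2 : ‖g k (xnext k) - g k xbarnext‖^2 ≤ (L*‖xnext k - xbarnext‖)^2 :=
        pow_le_pow_left₀ (norm_nonneg _) h 2
      rw [mul_pow] at h2; exact h2
    have hs := Finset.sum_le_sum (fun k (_ : k ∈ Finset.univ) => per k)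
    rw [← Finset.mul_sum] at hs
    rw [hSnd]; exact hs
  have hsmrev : ∑ i, ‖g i xbarnext - g i (xnext i)‖^2 = ∑ i, ‖g i (xnext i) - g i xbarnext‖^2 :=
    Finset.sum_congr rfl fun i _ => by rw [norm_sub_rev]
  have hzbG : (n:ℝ)*‖G - zb‖^2 ≤ L^2*Sn := by
    have e : G - zb = (1/(n:ℝ)) • ∑ k, (g k xbarnext - g k (xnext k)) := by
      rw [hG, hzbalt, ← smul_sub, ← Finset.sum_sub_distrib]
    have hj := jensen_sq n d (fun k => g k xbarnext - g k (xnext k))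
    have e3 : ‖G - zb‖^2 = (1/(n:ℝ))^2 * ‖∑ k, (g k xbarnext - g k (xnext k))‖^2 := by
      rw [e, norm_smul, mul_pow, Real.norm_eq_abs, sq_abs]
    rw [e3]
    calc (n:ℝ)*((1/(n:ℝ))^2*‖∑ k, (g k xbarnext - g k (xnext k))‖^2)
        ≤ (n:ℝ)*((1/(n:ℝ))^2*((n:ℝ)*(L^2*Sn))) := by
          apply mul_le_mul_of_nonneg_left _ hn'.le
          apply mul_le_mul_of_nonneg_left _ (by positivity)
          calc ‖∑ k, (g k xbarnext - g k (xnext k))‖^2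
              ≤ (n:ℝ)*∑ k, ‖g k xbarnext - g k (xnext k)‖^2 := hj
            _ ≤ (n:ℝ)*(L^2*Sn) := by
                rw [hsmrev]
                exact mul_le_mul_of_nonneg_left hsmn hn'.le
      _ = L^2*Sn := by field_simp
  have hZ : ∑ i, ‖(hr i + g i (xnext i)) - zb‖^2
      ≤ 4*(Er + δ^2*Dsum + L^2*Sn + L^2*Sn) := by
    have per : ∀ i, ‖(hr i + g i (xnext i)) - zb‖^2
        ≤ 4*(‖hr i - (Gr - g i xbarr)‖^2 + ‖(G - g i xbarnext) - (Gr - g i xbarr)‖^2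
            + ‖g i (xnext i) - g i xbarnext‖^2 + ‖G - zb‖^2) := by
      intro i
      have e : (hr i + g i (xnext i)) - zb
          = (hr i - (Gr - g i xbarr)) + ((Gr - g i xbarr) - (G - g i xbarnext))
            + (g i (xnext i) - g i xbarnext) + (G - zb) := by abel
      have h := sq4 d (hr i - (Gr - g i xbarr)) ((Gr - g i xbarr) - (G - g i xbarnext))
        (g i (xnext i) - g i xbarnext) (G - zb)
      rw [← e] at h
      have e2 : ‖(Gr - g i xbarr) - (G - g i xbarnext)‖
          = ‖(G - g i xbarnext) - (Gr - g i xbarr)‖ := norm_sub_rev _ _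
      rw [e2] at h; exact h
    have hs := Finset.sum_le_sum (fun i (_ : i ∈ Finset.univ) => per i)
    rw [← Finset.mul_sum, Finset.sum_add_distrib, Finset.sum_add_distrib,
      Finset.sum_add_distrib, ← hErd, sum_const_real n (‖G - zb‖^2)] at hs
    linarith only [hs, hsimD, hsmn, hzbG]
  have hEnbd : En ≤ 2*(ρ^2*∑ i, ‖(hr i + g i (xnext i)) - zb‖^2)
      + 4*((n:ℝ)*‖zb - G‖^2) + 4*(∑ i, ‖g i xbarnext - g i (xnext i)‖^2) := by
    have per : ∀ i, ‖hnext i - (G - g i xbarnext)‖^2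
        ≤ 2*‖(∑ j, W i j • (hr j + g j (xnext j))) - zb‖^2
          + 4*‖zb - G‖^2 + 4*‖g i xbarnext - g i (xnext i)‖^2 := by
      intro i
      have e : hnext i - (G - g i xbarnext)
          = ((∑ j, W i j • (hr j + g j (xnext j))) - zb)
            + ((zb - G) + (g i xbarnext - g i (xnext i))) := by
        rw [hhnext i]; abel
      have h1 := sq2 d ((∑ j, W i j • (hr j + g j (xnext j))) - zb)
        ((zb - G) + (g i xbarnext - g i (xnext i)))
      have h2 := sq2 d (zb - G) (g i xbarnext - g i (xnext i))
      rw [← e] at h1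
      linarith
    have hs := Finset.sum_le_sum (fun i (_ : i ∈ Finset.univ) => per i)
    rw [Finset.sum_add_distrib, Finset.sum_add_distrib, ← Finset.mul_sum,
      ← Finset.mul_sum, ← Finset.mul_sum, sum_const_real n (‖zb - G‖^2)] at hs
    rw [hEnd]
    have hmulW := mul_le_mul_of_nonneg_left hWz (by norm_num : (0:ℝ) ≤ 2)
    linarith only [hs, hmulW]
  have H5 : En ≤ 8*(ρ^2*Er) + 8*(ρ^2*(δ^2*Dsum)) + 9*(ρ^2*(L^2*Sh)) := by
    have hZs := mul_le_mul_of_nonneg_left hZ (sq_nonneg ρ)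
    have p1 : L^2*Sn ≤ L^2*(ρ^2*Sh) := mul_le_mul_of_nonneg_left hgos (sq_nonneg L)
    have p2 : ρ^2*(L^2*Sn) ≤ ρ^2*(L^2*(ρ^2*Sh)) :=
      mul_le_mul_of_nonneg_left p1 (sq_nonneg ρ)
    have hXnn : (0:ℝ) ≤ L^2*(ρ^2*Sh) :=
      mul_nonneg (sq_nonneg L) (mul_nonneg (sq_nonneg ρ) hShnn)
    have p3 : ρ^2*(L^2*(ρ^2*Sh)) ≤ (1/36)*(L^2*(ρ^2*Sh)) :=
      mul_le_mul_of_nonneg_right hρ36 hXnn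
    have hzbG' : (n:ℝ)*‖zb - G‖^2 ≤ L^2*Sn := by
      rw [show ‖zb - G‖ = ‖G - zb‖ from norm_sub_rev _ _]; exact hzbG
    have hsm' : ∑ i, ‖g i xbarnext - g i (xnext i)‖^2 ≤ L^2*Sn := by
      rw [hsmrev]; exact hsmn
    linarith only [hEnbd, hZs, p1, p2, p3, hzbG', hsm', hXnn, hWz]
  -- final scalar assembly
  have hSn36 : Sn ≤ (1/36)*Sh := by
    linarith only [hgos, mul_nonneg hShnn (sub_nonneg.2 hρ36)]
  have hDnle : m*(2*δ*Dn) ≤ (δ/18)*(m*Sh) + 2*δ*(m*((n:ℝ)*B)) := by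
    rw [hvarn]
    have h1 : m*Sn ≤ m*((1/36)*Sh) := mul_le_mul_of_nonneg_left hSn36 hm0
    have h2 := mul_le_mul_of_nonneg_left h1 hδ.le
    linarith only [h2]
  have hEnB : m*En ≤ (1/2)*Er + (1/2)*(δ^2*Dsum) + (1/4)*(m*(δ^2*Sh)) := by
    have c1 := mul_le_mul_of_nonneg_left H5 hm0
    have u1 : 0 ≤ Er*(1/16 - m*ρ^2) := mul_nonneg hErnn (by linarith)
    have u2 : 0 ≤ (δ^2*Dsum)*(1/16 - m*ρ^2) :=
      mul_nonneg (mul_nonneg (sq_nonneg δ) hDsumnn) (by linarith)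
    have u3 : 0 ≤ (m*Sh)*(δ^2 - 36*(L^2*ρ^2)) :=
      mul_nonneg (mul_nonneg hm0 hShnn) (by linarith)
    linarith only [c1, u1, u2, u3]
  have hEnδ : (1/δ)*(m*En) ≤ (1/2)*((1/δ)*Er) + (δ/2)*Dsum + (δ/4)*(m*Sh) := by
    have c2 := mul_le_mul_of_nonneg_left hEnB (by positivity : (0:ℝ) ≤ 1/δ)
    have e : (1/δ)*((1/2)*Er + (1/2)*(δ^2*Dsum) + (1/4)*(m*(δ^2*Sh)))
        = (1/2)*((1/δ)*Er) + (δ/2)*Dsum + (δ/4)*(m*Sh) := by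
      field_simp
    rw [e] at c2; exact c2
  have t5 : δ*Sh ≤ δ*(m*Sh) := by
    linarith only [mul_nonneg (mul_nonneg hδ.le hShnn) (sub_nonneg.2 hm1)]
  have t7 : (0:ℝ) ≤ δ*(m*Sh) := mul_nonneg hδ.le (mul_nonneg hm0 hShnn)
  have hH1' : A + T + 2*δ*Dsum + 2*δ*m*(Sh + (n:ℝ)*B) ≤ Fstar + 2*δ*Sr := by
    rw [← hvarh]; exact H1
  have goalS : Fnext + m*(2*δ*Dn) + (1/δ)*(m*En) + δ*Dsum + T
      ≤ Fstar + 2*δ*Sr + (1/δ)*Er := by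
    linarith only [H4, hH1', hEnδ, hDnle, t5, t7]
  rw [hfbar xbarnext, hfbar xstar, hErrr, hErrnext, ← hFnextd, ← hFstard]
  have hscaled := mul_le_mul_of_nonneg_left goalS (by positivity : (0:ℝ) ≤ 1/(n:ℝ))
  ring_nf at hscaled ⊢
  linarith only [hscaled]
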